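/- Bimonad structures on a given monad B on a monoidal category C are in one-to-one correspondence with monoidal structures on the Eilenberg–Moore category C^B such that the forgetful functor U^B : C^B → C is strict monoidal. -/

import Mathlib

open CategoryTheory Category MonoidalCategory

universe v₁ u₁

/-- An opmonoidal structure on a functor between monoidal categories. -/
structure OpmonStr {C : Type u₁} [Category.{v₁} C] [MonoidalCategory C]
    {D : Type u₁} [Category.{v₁} D] [MonoidalCategory D] (F : C ⥤ D) where
  d : ∀ x y : C, F.obj (x ⊗ y) ⟶ F.obj x ⊗ F.obj y
  e : F.obj (𝟙_ C) ⟶ 𝟙_ D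
  d_natural : ∀ {x x' y y' : C} (f : x ⟶ x') (g : y ⟶ y'),
    F.map (f ⊗ₘ g) ≫ d x' y' = d x y ≫ (F.map f ⊗ₘ F.map g)
  coassoc : ∀ x y z : C,
    d (x ⊗ y) z ≫ (d x y ⊗ₘ 𝟙 (F.obj z)) ≫ (α_ (F.obj x) (F.obj y) (F.obj z)).hom =
      F.map (α_ x y z).hom ≫ d x (y ⊗ z) ≫ (𝟙 (F.obj x) ⊗ₘ d y z)
  counit_left : ∀ x : C,
    d (𝟙_ C) x ≫ (e ⊗ₘ 𝟙 (F.obj x)) ≫ (λ_ (F.obj x)).hom = F.map (λ_ x).hom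
  counit_right : ∀ x : C,
    d x (𝟙_ C) ≫ (𝟙 (F.obj x) ⊗ₘ e) ≫ (ρ_ (F.obj x)).hom = F.map (ρ_ x).hom

/-- A bimonad structure on a given monad `t` on a monoidal category. -/
structure BimonadStr {C : Type u₁} [Category.{v₁} C] [MonoidalCategory C]
    (t : Monad C) where
  op : OpmonStr t.toFunctor
  mul_opmon : ∀ x y : C,
    t.μ.app (x ⊗ y) ≫ op.d x y =
      t.map (op.d x y) ≫ op.d (t.obj x) (t.obj y) ≫ (t.μ.app x ⊗ₘ t.μ.app y)
  mul_counit : t.μ.app (𝟙_ C) ≫ op.e = t.map op.e ≫ op.e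
  unit_opmon : ∀ x y : C, t.η.app (x ⊗ y) ≫ op.d x y = t.η.app x ⊗ₘ t.η.app y
  unit_counit : t.η.app (𝟙_ C) ≫ op.e = 𝟙 (𝟙_ C)

/-- A monoidal structure on the Eilenberg–Moore category of a monad `t` for which the
forgetful functor `U^t` is strict monoidal. -/
structure StrictMonoidalAlg {C : Type u₁} [Category.{v₁} C] [MonoidalCategory C]
    (t : Monad C) where
  inst : MonoidalCategory t.Algebra
  tensor_A : ∀ X Y : t.Algebra,
    (@MonoidalCategoryStruct.tensorObj _ _ inst.toMonoidalCategoryStruct X Y).A = X.A ⊗ Y.A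
  unit_A : (@MonoidalCategoryStruct.tensorUnit _ _ inst.toMonoidalCategoryStruct).A = 𝟙_ C
  tensorHom_f : ∀ {X X' Y Y' : t.Algebra} (f : X ⟶ X') (g : Y ⟶ Y'),
    HEq (@MonoidalCategoryStruct.tensorHom _ _ inst.toMonoidalCategoryStruct _ _ _ _ f g).f
      (f.f ⊗ₘ g.f)
  associator_f : ∀ X Y Z : t.Algebra,
    HEq (@MonoidalCategoryStruct.associator _ _ inst.toMonoidalCategoryStruct X Y Z).hom.f
      (α_ X.A Y.A Z.A).hom
  leftUnitor_f : ∀ X : t.Algebra,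
    HEq (@MonoidalCategoryStruct.leftUnitor _ _ inst.toMonoidalCategoryStruct X).hom.f
      (λ_ X.A).hom
  rightUnitor_f : ∀ X : t.Algebra,
    HEq (@MonoidalCategoryStruct.rightUnitor _ _ inst.toMonoidalCategoryStruct X).hom.f
      (ρ_ X.A).hom

namespace Stmt5Aux
open CategoryTheory.Monad

variable {C : Type u₁} [Category.{v₁} C] [MonoidalCategory C] {t : Monad C}

section Forward
variable (bs : BimonadStr t)

/-- tensor product of algebras -/
@[simps] abbrev tAlg (X Y : t.Algebra) : t.Algebra where
  A := X.A ⊗ Y.A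
  a := bs.op.d X.A Y.A ≫ (X.a ⊗ₘ Y.a)
  unit := by rw [← Category.assoc, bs.unit_opmon, tensorHom_comp_tensorHom, X.unit, Y.unit]; simp
  assoc := by
    rw [← Category.assoc, bs.mul_opmon, t.map_comp]
    slice_lhs 3 4 => rw [tensorHom_comp_tensorHom, X.assoc, Y.assoc, ← tensorHom_comp_tensorHom]
    slice_rhs 2 3 => rw [bs.op.d_natural]
    simp

/-- unit algebra -/
@[simps] abbrev uAlg : t.Algebra where
  A := 𝟙_ C
  a := bs.op.e
  unit := bs.unit_counit
  assoc := bs.mul_counit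

@[simps] def tHom {X X' Y Y' : t.Algebra} (f : X ⟶ X') (g : Y ⟶ Y') :
    tAlg bs X Y ⟶ tAlg bs X' Y' where
  f := f.f ⊗ₘ g.f
  h := by
    change t.map (f.f ⊗ₘ g.f) ≫ bs.op.d X'.A Y'.A ≫ (X'.a ⊗ₘ Y'.a) =
      (bs.op.d X.A Y.A ≫ (X.a ⊗ₘ Y.a)) ≫ (f.f ⊗ₘ g.f)
    slice_lhs 1 2 => rw [bs.op.d_natural]
    slice_lhs 2 3 => rw [tensorHom_comp_tensorHom, f.h, g.h, ← tensorHom_comp_tensorHom]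
    simp

@[simps!] def assocIso (X Y Z : t.Algebra) :
    tAlg bs (tAlg bs X Y) Z ≅ tAlg bs X (tAlg bs Y Z) :=
  Algebra.isoMk (α_ X.A Y.A Z.A)
    (by
      change t.map (α_ X.A Y.A Z.A).hom ≫ (bs.op.d X.A (Y.A ⊗ Z.A) ≫
          (X.a ⊗ₘ (bs.op.d Y.A Z.A ≫ (Y.a ⊗ₘ Z.a)))) = (bs.op.d (X.A ⊗ Y.A) Z.A ≫
          ((bs.op.d X.A Y.A ≫ (X.a ⊗ₘ Y.a)) ⊗ₘ Z.a)) ≫ (α_ X.A Y.A Z.A).hom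
      have e1 : X.a ⊗ₘ (bs.op.d Y.A Z.A ≫ (Y.a ⊗ₘ Z.a)) =
          (𝟙 (t.obj X.A) ⊗ₘ bs.op.d Y.A Z.A) ≫ (X.a ⊗ₘ (Y.a ⊗ₘ Z.a)) := by
        rw [tensorHom_comp_tensorHom, id_comp]
      have e2 : (bs.op.d X.A Y.A ≫ (X.a ⊗ₘ Y.a)) ⊗ₘ Z.a =
          (bs.op.d X.A Y.A ⊗ₘ 𝟙 (t.obj Z.A)) ≫ ((X.a ⊗ₘ Y.a) ⊗ₘ Z.a) := by
        rw [tensorHom_comp_tensorHom, id_comp]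
      rw [e1, e2]
      slice_rhs 3 4 => rw [associator_naturality]
      slice_rhs 1 3 => rw [bs.op.coassoc]
      simp)

@[simps!] def lUnitIso (X : t.Algebra) : tAlg bs (uAlg bs) X ≅ X :=
  Algebra.isoMk (λ_ X.A)
    (by
      change t.map (λ_ X.A).hom ≫ X.a = (bs.op.d (𝟙_ C) X.A ≫ (bs.op.e ⊗ₘ X.a)) ≫ (λ_ X.A).hom
      rw [← bs.op.counit_left X.A]
      have e1 : bs.op.e ⊗ₘ X.a = (bs.op.e ⊗ₘ 𝟙 (t.obj X.A)) ≫ (𝟙 (𝟙_ C) ⊗ₘ X.a) := by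
        rw [tensorHom_comp_tensorHom, comp_id, id_comp]
      rw [e1]
      slice_rhs 3 4 => rw [id_tensorHom, leftUnitor_naturality]
      simp)

@[simps!] def rUnitIso (X : t.Algebra) : tAlg bs X (uAlg bs) ≅ X :=
  Algebra.isoMk (ρ_ X.A)
    (by
      change t.map (ρ_ X.A).hom ≫ X.a = (bs.op.d X.A (𝟙_ C) ≫ (X.a ⊗ₘ bs.op.e)) ≫ (ρ_ X.A).hom
      rw [← bs.op.counit_right X.A]
      have e1 : X.a ⊗ₘ bs.op.e = (𝟙 (t.obj X.A) ⊗ₘ bs.op.e) ≫ (X.a ⊗ₘ 𝟙 (𝟙_ C)) := by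
        rw [tensorHom_comp_tensorHom, comp_id, id_comp]
      rw [e1]
      slice_rhs 3 4 => rw [tensorHom_id, rightUnitor_naturality]
      simp)

@[simps] abbrev monStruct : MonoidalCategoryStruct t.Algebra where
  tensorObj := tAlg bs
  tensorHom := tHom bs
  whiskerLeft X _ _ g := tHom bs (𝟙 X) g
  whiskerRight f Y := tHom bs f (𝟙 Y)
  tensorUnit := uAlg bs
  associator := assocIso bs
  leftUnitor := lUnitIso bs
  rightUnitor := rUnitIso bs

def monCat : MonoidalCategory t.Algebra :=
  @MonoidalCategory.ofTensorHom _ _ (monStruct bs)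
    (by intros; ext; dsimp [monStruct]; simp)
    (by intros; rfl)
    (by intros; rfl)
    (by intros; ext; dsimp [monStruct]; simp [← tensorHom_comp_tensorHom])
    (by intros; ext; dsimp [monStruct]; simp [associator_naturality])
    (by intros; ext; dsimp [monStruct]; simp)
    (by intros; ext; dsimp [monStruct]; simp)
    (by intros; ext; dsimp [monStruct]; simp)
    (by intros; ext; dsimp [monStruct]; simp)

end Forward

section Backward

/-- transported structure map -/
def str (W : t.Algebra) {c : C} (h : W.A = c) : t.obj c ⟶ c :=
  eqToHom (by rw [h]) ≫ W.a ≫ eqToHom h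

omit [MonoidalCategory C] in
lemma str_rfl (W : t.Algebra) : str W rfl = W.a := by simp [str]

omit [MonoidalCategory C] in
lemma str_unit (W : t.Algebra) {c : C} (h : W.A = c) : t.η.app c ≫ str W h = 𝟙 c := by
  subst h; rw [str_rfl, W.unit]

omit [MonoidalCategory C] in
lemma str_mul (W : t.Algebra) {c : C} (h : W.A = c) :
    t.μ.app c ≫ str W h = t.map (str W h) ≫ str W h := by
  subst h; rw [str_rfl, W.assoc]

omit [MonoidalCategory C] in
lemma str_heq (W : t.Algebra) {c : C} (h : W.A = c) : HEq (str W h) W.a := by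
  subst h; rw [str_rfl]

omit [MonoidalCategory C] in
lemma str_hom {W V : t.Algebra} (f : W ⟶ V) {c c' : C} (hW : W.A = c) (hV : V.A = c')
    (f' : c ⟶ c') (hf : HEq f.f f') :
    t.map f' ≫ str V hV = str W hW ≫ f' := by
  subst hW; subst hV
  rw [str_rfl, str_rfl, ← eq_of_heq hf, f.h]

omit [MonoidalCategory C] in
lemma str_eq (W : t.Algebra) {c : C} (h : W.A = c) :
    W.a = eqToHom (congrArg t.obj h) ≫ str W h ≫ eqToHom h.symm := by
  subst h; rw [str_rfl]; simp

lemma comp_eqToHom_tensor_heq {a b b' z w : C} (h : b = b') (u : a ⟶ b) (v : z ⟶ w) :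
    HEq ((u ≫ eqToHom h) ⊗ₘ v) (u ⊗ₘ v) := by subst h; simp

lemma tensor_comp_eqToHom_heq {a b b' z w : C} (h : b = b') (u : a ⟶ b) (v : z ⟶ w) :
    HEq (v ⊗ₘ (u ≫ eqToHom h)) (v ⊗ₘ u) := by subst h; simp

variable (sm : StrictMonoidalAlg t)

/-- sm's tensor product of algebras -/
abbrev tob (X Y : t.Algebra) : t.Algebra :=
  @MonoidalCategoryStruct.tensorObj _ _ sm.inst.toMonoidalCategoryStruct X Y

/-- sm's tensor product of algebra morphisms -/
abbrev thom {X X' Y Y' : t.Algebra} (f : X ⟶ X') (g : Y ⟶ Y') : tob sm X Y ⟶ tob sm X' Y' :=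
  @MonoidalCategoryStruct.tensorHom _ _ sm.inst.toMonoidalCategoryStruct _ _ _ _ f g

/-- sm's tensor unit -/
abbrev tun : t.Algebra := @MonoidalCategoryStruct.tensorUnit _ _ sm.inst.toMonoidalCategoryStruct

lemma tob_free_A (x y : C) : (tob sm (t.free.obj x) (t.free.obj y)).A = t.obj x ⊗ t.obj y :=
  sm.tensor_A _ _

/-- structure map of the tensor product of free algebras -/
def Θ (x y : C) : t.obj (t.obj x ⊗ t.obj y) ⟶ t.obj x ⊗ t.obj y :=
  str (tob sm (t.free.obj x) (t.free.obj y)) (tob_free_A sm x y)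

def d0 (x y : C) : t.obj (x ⊗ y) ⟶ t.obj x ⊗ t.obj y :=
  t.map (t.η.app x ⊗ₘ t.η.app y) ≫ Θ sm x y

def e0 : t.obj (𝟙_ C) ⟶ 𝟙_ C := str (tun sm) sm.unit_A

/-- counit algebra morphism from the free algebra -/
def εa (W : t.Algebra) {c : C} (h : W.A = c) : t.free.obj c ⟶ W where
  f := str W h ≫ eqToHom h.symm
  h := by subst h; rw [str_rfl]; simp [W.assoc]; exact ((congrArg (fun k => t.map k ≫ W.a)
    (comp_id W.a)).trans (W.assoc.symm.trans ((comp_id (t.μ.app W.A ≫ W.a)).symm.trans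
      (Category.assoc _ _ _))))

omit [MonoidalCategory C] in
lemma εa_f_rfl (W : t.Algebra) : (εa W rfl).f = W.a := by simp [εa, str_rfl]; erw [comp_id]

lemma str_tensor (W V : t.Algebra) {c c' : C} (hW : W.A = c) (hV : V.A = c')
    (h : (tob sm W V).A = c ⊗ c') :
    str (tob sm W V) h =
      t.map (t.η.app c ⊗ₘ t.η.app c') ≫ Θ sm c c' ≫ (str W hW ⊗ₘ str V hV) := by
  subst hW; subst hV
  have hf : HEq ((thom sm (εa W rfl) (εa V rfl)).f) (W.a ⊗ₘ V.a) := by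
    rw [← εa_f_rfl W, ← εa_f_rfl V]; exact sm.tensorHom_f _ _
  have h1 := str_hom (thom sm (εa W rfl) (εa V rfl)) (tob_free_A sm _ _) (sm.tensor_A W V)
    (W.a ⊗ₘ V.a) hf
  have h2 : str (tob sm W V) h = str (tob sm W V) (sm.tensor_A W V) := rfl
  rw [h2, str_rfl, str_rfl]
  unfold Θ
  rw [← h1, ← Category.assoc, ← t.map_comp, tensorHom_comp_tensorHom, W.unit, V.unit]
  simp

/-- `d0` commutes with multiplication in the appropriate sense -/
lemma d0_mul_free (x y : C) :
    t.map (d0 sm x y) ≫ Θ sm x y = t.μ.app (x ⊗ y) ≫ d0 sm x y := by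
  unfold d0 Θ
  rw [t.map_comp, Category.assoc, ← str_mul]
  have h1 := t.μ.naturality (t.η.app x ⊗ₘ t.η.app y)
  simp only [Functor.comp_map] at h1
  rw [← Category.assoc, h1, Category.assoc]
  rfl

/-- free extension of `d0` as an algebra morphism -/
def δ (x y : C) : t.free.obj (x ⊗ y) ⟶ tob sm (t.free.obj x) (t.free.obj y) where
  f := d0 sm x y ≫ eqToHom (tob_free_A sm x y).symm
  h := by
    change t.map (d0 sm x y ≫ eqToHom (tob_free_A sm x y).symm) ≫
        (tob sm (t.free.obj x) (t.free.obj y)).a =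
      t.μ.app (x ⊗ y) ≫ d0 sm x y ≫ eqToHom (tob_free_A sm x y).symm
    conv_lhs => rw [str_eq (tob sm (t.free.obj x) (t.free.obj y)) (tob_free_A sm x y)]
    simp only [t.map_comp, eqToHom_map, Category.assoc, eqToHom_trans, eqToHom_refl,
      eqToHom_trans_assoc, Category.comp_id, Category.id_comp]
    rw [← Category.assoc]
    rw [show t.map (d0 sm x y) ≫ str (tob sm (t.free.obj x) (t.free.obj y))
        (tob_free_A sm x y) = t.μ.app (x ⊗ y) ≫ d0 sm x y from d0_mul_free sm x y]
    simp [Monad.free]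

lemma d0_unit (x y : C) : t.η.app (x ⊗ y) ≫ d0 sm x y = t.η.app x ⊗ₘ t.η.app y := by
  unfold d0 Θ
  rw [← Category.assoc, ← t.η.naturality, Category.assoc, str_unit]
  simp

lemma e0_unit : t.η.app (𝟙_ C) ≫ e0 sm = 𝟙 (𝟙_ C) := str_unit _ _

lemma e0_mul : t.μ.app (𝟙_ C) ≫ e0 sm = t.map (e0 sm) ≫ e0 sm := str_mul _ _

/-- multiplication as algebra morphism between free algebras -/
def μa (x : C) : t.free.obj (t.obj x) ⟶ t.free.obj x where
  f := t.μ.app x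
  h := Monad.assoc t x

lemma Θ_mul (x y : C) :
    t.map (t.μ.app x ⊗ₘ t.μ.app y) ≫ Θ sm x y =
      Θ sm (t.obj x) (t.obj y) ≫ (t.μ.app x ⊗ₘ t.μ.app y) :=
  str_hom (thom sm (μa x) (μa y)) (sm.tensor_A _ _) (sm.tensor_A _ _) _
    (sm.tensorHom_f (μa x) (μa y))

lemma d0_mul (x y : C) :
    t.μ.app (x ⊗ y) ≫ d0 sm x y =
      t.map (d0 sm x y) ≫ d0 sm (t.obj x) (t.obj y) ≫ (t.μ.app x ⊗ₘ t.μ.app y) := by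
  rw [← d0_mul_free]
  conv_rhs => rw [show d0 sm (t.obj x) (t.obj y) =
    t.map (t.η.app (t.obj x) ⊗ₘ t.η.app (t.obj y)) ≫ Θ sm (t.obj x) (t.obj y) from rfl]
  rw [Category.assoc, ← Θ_mul, ← Category.assoc, ← Functor.map_comp, ← Category.assoc,
    ← Functor.map_comp, Category.assoc, tensorHom_comp_tensorHom, t.left_unit, t.left_unit]
  simp

lemma tob_A (X Y : t.Algebra) : (tob sm X Y).A = X.A ⊗ Y.A := sm.tensor_A X Y

lemma tun_A : (tun sm).A = 𝟙_ C := sm.unit_A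

/-- sm's associator -/
abbrev tassoc (X Y Z : t.Algebra) : tob sm (tob sm X Y) Z ⟶ tob sm X (tob sm Y Z) :=
  (@MonoidalCategoryStruct.associator _ _ sm.inst.toMonoidalCategoryStruct X Y Z).hom

lemma d0_coassoc (x y z : C) :
    d0 sm (x ⊗ y) z ≫ (d0 sm x y ⊗ₘ 𝟙 (t.obj z)) ≫
        (α_ (t.obj x) (t.obj y) (t.obj z)).hom =
      t.map (α_ x y z).hom ≫ d0 sm x (y ⊗ z) ≫ (𝟙 (t.obj x) ⊗ₘ d0 sm y z) := by
  have hL : (tob sm (tob sm (t.free.obj x) (t.free.obj y)) (t.free.obj z)).A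
      = (t.obj x ⊗ t.obj y) ⊗ t.obj z := by rw [tob_A, tob_A]; rfl
  have hR : (tob sm (t.free.obj x) (tob sm (t.free.obj y) (t.free.obj z))).A
      = t.obj x ⊗ (t.obj y ⊗ t.obj z) := by rw [tob_A, tob_A]; rfl
  have h1 : t.map (α_ (t.obj x) (t.obj y) (t.obj z)).hom ≫
        str (tob sm (t.free.obj x) (tob sm (t.free.obj y) (t.free.obj z))) hR =
      str (tob sm (tob sm (t.free.obj x) (t.free.obj y)) (t.free.obj z)) hL ≫
        (α_ (t.obj x) (t.obj y) (t.obj z)).hom :=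
    str_hom (tassoc sm _ _ _) hL hR _ (sm.associator_f _ _ _)
  have h2 : t.map (d0 sm x y ⊗ₘ 𝟙 (t.obj z)) ≫
        str (tob sm (tob sm (t.free.obj x) (t.free.obj y)) (t.free.obj z)) hL =
      Θ sm (x ⊗ y) z ≫ (d0 sm x y ⊗ₘ 𝟙 (t.obj z)) :=
    str_hom (thom sm (δ sm x y) (𝟙 (t.free.obj z))) (sm.tensor_A _ _) hL _
      (HEq.trans (sm.tensorHom_f _ _) (comp_eqToHom_tensor_heq _ _ _))
  have h3 : t.map (𝟙 (t.obj x) ⊗ₘ d0 sm y z) ≫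
        str (tob sm (t.free.obj x) (tob sm (t.free.obj y) (t.free.obj z))) hR =
      Θ sm x (y ⊗ z) ≫ (𝟙 (t.obj x) ⊗ₘ d0 sm y z) :=
    str_hom (thom sm (𝟙 (t.free.obj x)) (δ sm y z)) (sm.tensor_A _ _) hR _
      (HEq.trans (sm.tensorHom_f _ _) (tensor_comp_eqToHom_heq _ _ _))
  conv_lhs => rw [show d0 sm (x ⊗ y) z
    = t.map (t.η.app (x ⊗ y) ⊗ₘ t.η.app z) ≫ Θ sm (x ⊗ y) z from rfl]
  conv_rhs => rw [show d0 sm x (y ⊗ z)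
    = t.map (t.η.app x ⊗ₘ t.η.app (y ⊗ z)) ≫ Θ sm x (y ⊗ z) from rfl]
  simp only [Category.assoc]
  rw [← reassoc_of% h2, ← h1, ← h3]
  simp only [← Functor.map_comp_assoc]
  congr 2
  rw [tensorHom_comp_tensorHom_assoc, d0_unit, comp_id, associator_naturality, tensorHom_comp_tensorHom,
    comp_id, d0_unit]
  rfl

/-- sm's left and right unitors -/
abbrev tlu (X : t.Algebra) : tob sm (tun sm) X ⟶ X :=
  (@MonoidalCategoryStruct.leftUnitor _ _ sm.inst.toMonoidalCategoryStruct X).hom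

abbrev tru (X : t.Algebra) : tob sm X (tun sm) ⟶ X :=
  (@MonoidalCategoryStruct.rightUnitor _ _ sm.inst.toMonoidalCategoryStruct X).hom

lemma d0_counit_left (x : C) :
    d0 sm (𝟙_ C) x ≫ (e0 sm ⊗ₘ 𝟙 (t.obj x)) ≫ (λ_ (t.obj x)).hom =
      t.map (λ_ x).hom := by
  have hW : (tob sm (tun sm) (t.free.obj x)).A = 𝟙_ C ⊗ t.obj x := by
    rw [tob_A, tun_A]; rfl
  have h1 : t.map (λ_ (t.obj x)).hom ≫ str (t.free.obj x) rfl =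
      str (tob sm (tun sm) (t.free.obj x)) hW ≫ (λ_ (t.obj x)).hom :=
    str_hom (tlu sm (t.free.obj x)) hW rfl _ (sm.leftUnitor_f _)
  have h2 : t.map (e0 sm ⊗ₘ 𝟙 (t.obj x)) ≫ str (tob sm (tun sm) (t.free.obj x)) hW =
      Θ sm (𝟙_ C) x ≫ (e0 sm ⊗ₘ 𝟙 (t.obj x)) :=
    str_hom (thom sm (εa (tun sm) sm.unit_A) (𝟙 (t.free.obj x))) (sm.tensor_A _ _) hW _
      (HEq.trans (sm.tensorHom_f _ _) (comp_eqToHom_tensor_heq _ _ _))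
  conv_lhs => rw [show d0 sm (𝟙_ C) x
    = t.map (t.η.app (𝟙_ C) ⊗ₘ t.η.app x) ≫ Θ sm (𝟙_ C) x from rfl]
  simp only [Category.assoc]
  rw [← reassoc_of% h2, ← h1]
  simp only [← Functor.map_comp_assoc]
  rw [tensorHom_comp_tensorHom_assoc, e0_unit, comp_id]
  simp [str_rfl]; erw [str_rfl]; simp

lemma d0_counit_right (x : C) :
    d0 sm x (𝟙_ C) ≫ (𝟙 (t.obj x) ⊗ₘ e0 sm) ≫ (ρ_ (t.obj x)).hom =
      t.map (ρ_ x).hom := by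
  have hW : (tob sm (t.free.obj x) (tun sm)).A = t.obj x ⊗ 𝟙_ C := by
    rw [tob_A, tun_A]; rfl
  have h1 : t.map (ρ_ (t.obj x)).hom ≫ str (t.free.obj x) rfl =
      str (tob sm (t.free.obj x) (tun sm)) hW ≫ (ρ_ (t.obj x)).hom :=
    str_hom (tru sm (t.free.obj x)) hW rfl _ (sm.rightUnitor_f _)
  have h2 : t.map (𝟙 (t.obj x) ⊗ₘ e0 sm) ≫ str (tob sm (t.free.obj x) (tun sm)) hW =
      Θ sm x (𝟙_ C) ≫ (𝟙 (t.obj x) ⊗ₘ e0 sm) :=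
    str_hom (thom sm (𝟙 (t.free.obj x)) (εa (tun sm) sm.unit_A)) (sm.tensor_A _ _) hW _
      (HEq.trans (sm.tensorHom_f _ _) (tensor_comp_eqToHom_heq _ _ _))
  conv_lhs => rw [show d0 sm x (𝟙_ C)
    = t.map (t.η.app x ⊗ₘ t.η.app (𝟙_ C)) ≫ Θ sm x (𝟙_ C) from rfl]
  simp only [Category.assoc]
  rw [← reassoc_of% h2, ← h1]
  simp only [← Functor.map_comp_assoc]
  rw [tensorHom_comp_tensorHom_assoc, e0_unit, comp_id]
  simp [str_rfl]; erw [str_rfl]; simp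

/-- the bimonad structure extracted from a strict monoidal structure on the algebras -/
def toBimonad : BimonadStr t where
  op :=
    { d := d0 sm
      e := e0 sm
      d_natural := by
        intro x x' y y' f g
        have h1 : t.map (t.map f ⊗ₘ t.map g) ≫ Θ sm x' y' =
            Θ sm x y ≫ (t.map f ⊗ₘ t.map g) :=
          str_hom (thom sm (t.free.map f) (t.free.map g)) (sm.tensor_A _ _)
            (sm.tensor_A _ _) _ (sm.tensorHom_f _ _)
        have hf : f ≫ t.η.app x' = t.η.app x ≫ t.map f := by
          simpa using t.η.naturality f
        have hg : g ≫ t.η.app y' = t.η.app y ≫ t.map g := by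
          simpa using t.η.naturality g
        conv_rhs => rw [show d0 sm x y
          = t.map (t.η.app x ⊗ₘ t.η.app y) ≫ Θ sm x y from rfl]
        conv_lhs => rw [show d0 sm x' y'
          = t.map (t.η.app x' ⊗ₘ t.η.app y') ≫ Θ sm x' y' from rfl]
        rw [Category.assoc, ← h1]
        simp only [← Functor.map_comp_assoc]
        rw [tensorHom_comp_tensorHom, tensorHom_comp_tensorHom, hf, hg]
      coassoc := d0_coassoc sm
      counit_left := d0_counit_left sm
      counit_right := d0_counit_right sm }
  mul_opmon := d0_mul sm
  mul_counit := e0_mul sm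
  unit_opmon := d0_unit sm
  unit_counit := e0_unit sm

end Backward

section Glue

/-- package the forward construction -/
def toStrict (bs : BimonadStr t) : StrictMonoidalAlg t where
  inst := monCat bs
  tensor_A := fun _ _ => rfl
  unit_A := rfl
  tensorHom_f := fun _ _ => HEq.rfl
  associator_f := fun _ _ _ => HEq.rfl
  leftUnitor_f := fun _ => HEq.rfl
  rightUnitor_f := fun _ => HEq.rfl

omit [MonoidalCategory C] in
lemma alg_ext {W V : t.Algebra} (h1 : W.A = V.A) (h2 : HEq W.a V.a) : W = V := by
  obtain ⟨A1, a1, _, _⟩ := W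
  obtain ⟨A2, a2, _, _⟩ := V
  dsimp at h1 h2
  subst h1
  obtain rfl : a1 = a2 := eq_of_heq h2
  rfl

omit [MonoidalCategory C] in
lemma hom_heq {W V W' V' : t.Algebra} (hW : W = W') (hV : V = V')
    {f : W ⟶ V} {f' : W' ⟶ V'} (h : HEq f.f f'.f) : HEq f f' := by
  subst hW; subst hV
  exact heq_of_eq (Monad.Algebra.Hom.ext (eq_of_heq h))

omit [MonoidalCategory C] in
lemma iso_heq {W V W' V' : t.Algebra} (hW : W = W') (hV : V = V')
    {i : W ≅ V} {i' : W' ≅ V'} (h : HEq i.hom i'.hom) : HEq i i' := by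
  subst hW; subst hV
  exact heq_of_eq (Iso.ext (eq_of_heq h))

lemma bimonad_ext {b1 b2 : BimonadStr t} (hd : b1.op.d = b2.op.d)
    (he : b1.op.e = b2.op.e) : b1 = b2 := by
  obtain ⟨⟨d1, e1, _, _, _, _⟩, _, _, _, _⟩ := b1
  obtain ⟨⟨d2, e2, _, _, _, _⟩, _, _, _, _⟩ := b2
  dsimp at hd he
  subst hd; subst he
  rfl

lemma sma_ext {s1 s2 : StrictMonoidalAlg t} (h : s1.inst = s2.inst) : s1 = s2 := by
  obtain ⟨i1, _, _, _, _, _, _⟩ := s1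
  obtain ⟨i2, _, _, _, _, _, _⟩ := s2
  dsimp at h
  subst h
  rfl

lemma mc_ext {A : Type u₁} [Category.{v₁} A] {i1 i2 : MonoidalCategory A}
    (h : i1.toMonoidalCategoryStruct = i2.toMonoidalCategoryStruct) : i1 = i2 := by
  obtain ⟨s1, _, _, _, _, _, _, _⟩ := i1
  obtain ⟨s2, _, _, _, _, _, _, _⟩ := i2
  dsimp at h
  subst h
  rfl

lemma mcs_ext {A : Type u₁} [Category.{v₁} A] {i1 i2 : MonoidalCategoryStruct A}
    (hobj : i1.tensorObj = i2.tensorObj)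
    (hunit : i1.tensorUnit = i2.tensorUnit)
    (hwl : HEq @i1.whiskerLeft @i2.whiskerLeft)
    (hwr : HEq @i1.whiskerRight @i2.whiskerRight)
    (hth : HEq @i1.tensorHom @i2.tensorHom)
    (ha : HEq i1.associator i2.associator)
    (hl : HEq i1.leftUnitor i2.leftUnitor)
    (hr : HEq i1.rightUnitor i2.rightUnitor) : i1 = i2 := by
  obtain ⟨obj1, wl1, wr1, th1, un1, as1, lu1, ru1⟩ := i1
  obtain ⟨obj2, wl2, wr2, th2, un2, as2, lu2, ru2⟩ := i2
  dsimp at *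
  subst hobj; subst hunit
  rw [eq_of_heq hwl, eq_of_heq hwr, eq_of_heq hth, eq_of_heq ha, eq_of_heq hl,
    eq_of_heq hr]

lemma left_inv (bs : BimonadStr t) : toBimonad (toStrict bs) = bs := by
  apply bimonad_ext
  · funext x y
    show t.map (t.η.app x ⊗ₘ t.η.app y) ≫
      str (tAlg bs (t.free.obj x) (t.free.obj y)) ((toStrict bs).tensor_A _ _) = _
    erw [show str (tAlg bs (t.free.obj x) (t.free.obj y)) ((toStrict bs).tensor_A _ _)
      = (tAlg bs (t.free.obj x) (t.free.obj y)).a from by simp [str]]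
    change t.map (t.η.app x ⊗ₘ t.η.app y) ≫ bs.op.d (t.obj x) (t.obj y) ≫
      (t.μ.app x ⊗ₘ t.μ.app y) = bs.op.d x y
    rw [← Category.assoc, bs.op.d_natural, Category.assoc, tensorHom_comp_tensorHom,
      t.right_unit, t.right_unit]
    simp
  · show str (uAlg bs) ((toStrict bs).unit_A) = _
    rw [show str (uAlg bs) ((toStrict bs).unit_A) = (uAlg bs).a from by simp [str]]

lemma tensorObj_eq (sm : StrictMonoidalAlg t) (X Y : t.Algebra) :
    tAlg (toBimonad sm) X Y = tob sm X Y := by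
  apply alg_ext
  · exact (tob_A sm X Y).symm
  · show HEq (d0 sm X.A Y.A ≫ (X.a ⊗ₘ Y.a)) _
    have h1 := str_tensor sm X Y rfl rfl (tob_A sm X Y)
    rw [str_rfl, str_rfl] at h1
    have h2 : d0 sm X.A Y.A ≫ (X.a ⊗ₘ Y.a) = str (tob sm X Y) (tob_A sm X Y) := by
      rw [h1]; rw [d0]; simp [Category.assoc]
    rw [h2]
    exact str_heq _ _

lemma tensorUnit_eq (sm : StrictMonoidalAlg t) : uAlg (toBimonad sm) = tun sm := by
  apply alg_ext
  · exact (tun_A sm).symm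
  · show HEq (e0 sm) _
    exact str_heq _ _

lemma right_inv (sm : StrictMonoidalAlg t) : toStrict (toBimonad sm) = sm := by
  apply sma_ext
  apply mc_ext
  apply mcs_ext
  · funext X Y
    exact tensorObj_eq sm X Y
  · exact tensorUnit_eq sm
  · -- whiskerLeft
    refine Function.hfunext rfl fun X X' hX => ?_
    obtain rfl : X = X' := eq_of_heq hX
    refine Function.hfunext rfl fun Y Y' hY => ?_
    obtain rfl : Y = Y' := eq_of_heq hY
    refine Function.hfunext rfl fun Z Z' hZ => ?_
    obtain rfl : Z = Z' := eq_of_heq hZ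
    refine Function.hfunext rfl fun g g' hg => ?_
    obtain rfl : g = g' := eq_of_heq hg
    refine hom_heq (tensorObj_eq sm X Y) (tensorObj_eq sm X Z) ?_
    have h3 : @MonoidalCategoryStruct.whiskerLeft _ _ sm.inst.toMonoidalCategoryStruct X _ _ g
        = @MonoidalCategoryStruct.tensorHom _ _ sm.inst.toMonoidalCategoryStruct _ _ _ _
          (𝟙 X) g := by
      letI := sm.inst
      exact (MonoidalCategory.id_tensorHom X g).symm
    rw [h3]
    have h2 := sm.tensorHom_f (𝟙 X) g
    simp only [Monad.Algebra.id_f] at h2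
    exact h2.symm
  · -- whiskerRight
    refine Function.hfunext rfl fun X X' hX => ?_
    obtain rfl : X = X' := eq_of_heq hX
    refine Function.hfunext rfl fun Y Y' hY => ?_
    obtain rfl : Y = Y' := eq_of_heq hY
    refine Function.hfunext rfl fun g g' hg => ?_
    obtain rfl : g = g' := eq_of_heq hg
    refine Function.hfunext rfl fun Z Z' hZ => ?_
    obtain rfl : Z = Z' := eq_of_heq hZ
    refine hom_heq (tensorObj_eq sm X Z) (tensorObj_eq sm Y Z) ?_
    have h3 : @MonoidalCategoryStruct.whiskerRight _ _ sm.inst.toMonoidalCategoryStruct _ _ g Z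
        = @MonoidalCategoryStruct.tensorHom _ _ sm.inst.toMonoidalCategoryStruct _ _ _ _
          g (𝟙 Z) := by
      letI := sm.inst
      exact (MonoidalCategory.tensorHom_id g Z).symm
    rw [h3]
    have h2 := sm.tensorHom_f g (𝟙 Z)
    simp only [Monad.Algebra.id_f] at h2
    exact h2.symm
  · -- tensorHom
    refine Function.hfunext rfl fun X X' hX => ?_
    obtain rfl : X = X' := eq_of_heq hX
    refine Function.hfunext rfl fun Y Y' hY => ?_
    obtain rfl : Y = Y' := eq_of_heq hY
    refine Function.hfunext rfl fun Z Z' hZ => ?_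
    obtain rfl : Z = Z' := eq_of_heq hZ
    refine Function.hfunext rfl fun W W' hW => ?_
    obtain rfl : W = W' := eq_of_heq hW
    refine Function.hfunext rfl fun f f' hf => ?_
    obtain rfl : f = f' := eq_of_heq hf
    refine Function.hfunext rfl fun g g' hg => ?_
    obtain rfl : g = g' := eq_of_heq hg
    refine hom_heq (tensorObj_eq sm X Z) (tensorObj_eq sm Y W) ?_
    exact (sm.tensorHom_f f g).symm
  · -- associator
    refine Function.hfunext rfl fun X X' hX => ?_
    obtain rfl : X = X' := eq_of_heq hX
    refine Function.hfunext rfl fun Y Y' hY => ?_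
    obtain rfl : Y = Y' := eq_of_heq hY
    refine Function.hfunext rfl fun Z Z' hZ => ?_
    obtain rfl : Z = Z' := eq_of_heq hZ
    have e1 : tAlg (toBimonad sm) (tAlg (toBimonad sm) X Y) Z = tob sm (tob sm X Y) Z := by
      rw [tensorObj_eq, tensorObj_eq]
    have e2 : tAlg (toBimonad sm) X (tAlg (toBimonad sm) Y Z) = tob sm X (tob sm Y Z) := by
      rw [tensorObj_eq, tensorObj_eq]
    exact iso_heq e1 e2 (hom_heq e1 e2 (sm.associator_f X Y Z).symm)
  · -- leftUnitor
    refine Function.hfunext rfl fun X X' hX => ?_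
    obtain rfl : X = X' := eq_of_heq hX
    have e1 : tAlg (toBimonad sm) (uAlg (toBimonad sm)) X = tob sm (tun sm) X := by
      rw [tensorUnit_eq, tensorObj_eq]
    exact iso_heq e1 rfl (hom_heq e1 rfl (sm.leftUnitor_f X).symm)
  · -- rightUnitor
    refine Function.hfunext rfl fun X X' hX => ?_
    obtain rfl : X = X' := eq_of_heq hX
    have e1 : tAlg (toBimonad sm) X (uAlg (toBimonad sm)) = tob sm X (tun sm) := by
      rw [tensorUnit_eq, tensorObj_eq]
    exact iso_heq e1 rfl (hom_heq e1 rfl (sm.rightUnitor_f X).symm)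

end Glue
end Stmt5Aux

/-- Bimonad structures on a monad `t` on a monoidal category `C` are in one-to-one
correspondence with monoidal structures on `C^t` for which the forgetful functor is
strict monoidal; the correspondence sends a bimonad structure `(B₂, B₀)` to the monoidal
structure with `(x, θ_x) ⊗ (y, θ_y) = (x ⊗ y, (θ_x ⊗ θ_y) ∘ B₂)` and unit `(1, B₀)`. -/
theorem stmt5 {C : Type u₁} [Category.{v₁} C] [MonoidalCategory C] (t : Monad C) :
    ∃ e : BimonadStr t ≃ StrictMonoidalAlg t,
      ∀ bs : BimonadStr t,
        (∀ X Y : t.Algebra,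
          HEq (@MonoidalCategoryStruct.tensorObj _ _ (e bs).inst.toMonoidalCategoryStruct
                X Y).a
            (bs.op.d X.A Y.A ≫ (X.a ⊗ₘ Y.a))) ∧
        HEq (@MonoidalCategoryStruct.tensorUnit _ _ (e bs).inst.toMonoidalCategoryStruct).a
          bs.op.e := by
  refine ⟨⟨Stmt5Aux.toStrict, Stmt5Aux.toBimonad, Stmt5Aux.left_inv, Stmt5Aux.right_inv⟩, ?_⟩
  intro bs
  exact ⟨fun X Y => HEq.rfl, HEq.rfl⟩
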